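/- Let (s_n), (c_n) be sequences of nonnegative reals and (a_n) a sequence in [0,1] with s_{n+1} ≤ (1 - a_n) s_n + c_n for all n. Assume L ∈ ℕ, L ≥ 1 is an upper bound on (s_n), that θ : ℕ → ℕ is a rate of divergence for the series Σ a_n (i.e., Σ_{i=0}^{θ(n)} a_i ≥ n for all n), and χ : ℕ → ℕ is a Cauchy modulus for the series Σ c_n (i.e., for all k and all n ≥ χ(k) and all p, Σ_{i=n+1}^{n+p} c_i ≤ 1/(k+1)). Then for all k ∈ ℕ and all n ≥ θ(χ(2k+1) + 1 + ⌈ln(2L(k+1))⌉) + 1, we have s_n ≤ 1/(k+1). -/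

import Mathlib

theorem quantitative_xu (s c : ℕ → ℝ) (a : ℕ → ℝ)
    (hs : ∀ n, 0 ≤ s n) (hc : ∀ n, 0 ≤ c n) (ha : ∀ n, a n ∈ Set.Icc (0:ℝ) 1)
    (hrec : ∀ n, s (n + 1) ≤ (1 - a n) * s n + c n)
    (L : ℕ) (hL : 1 ≤ L) (hLs : ∀ n, s n ≤ L)
    (θ : ℕ → ℕ) (hθ : ∀ n : ℕ, (n : ℝ) ≤ ∑ i ∈ Finset.range (θ n + 1), a i)
    (χ : ℕ → ℕ)
    (hχ : ∀ k n : ℕ, χ k ≤ n → ∀ p : ℕ,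
      ∑ i ∈ Finset.Ico (n + 1) (n + 1 + p), c i ≤ 1 / (k + 1)) :
    ∀ k n : ℕ,
      θ (χ (2 * k + 1) + 1 + ⌈Real.log (2 * L * (k + 1))⌉₊) + 1 ≤ n →
      s n ≤ 1 / (k + 1) := by
  intro k n hn
  have ha0 : ∀ i, 0 ≤ a i := fun i => (ha i).1
  have ha1 : ∀ i, a i ≤ 1 := fun i => (ha i).2
  set M := ⌈Real.log (2 * L * (k + 1))⌉₊ with hM
  set N := χ (2 * k + 1) + 1 with hN
  -- sum of a over any range is at most its length
  have hlen : ∀ t : ℕ, ∑ i ∈ Finset.range t, a i ≤ t := by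
    intro t
    calc ∑ i ∈ Finset.range t, a i ≤ ∑ i ∈ Finset.range t, (1:ℝ) :=
          Finset.sum_le_sum fun i _ => ha1 i
      _ = t := by simp
  have hsumθ : ((N + M : ℕ) : ℝ) ≤ ∑ i ∈ Finset.range (θ (N + M) + 1), a i := hθ (N + M)
  have hθge : N + M ≤ θ (N + M) + 1 := by
    have h2 := hlen (θ (N + M) + 1)
    exact_mod_cast hsumθ.trans h2
  have hNn : N ≤ n := le_trans (le_trans (Nat.le_add_right N M) hθge) hn
  -- key unfolding inequality
  have key : ∀ m, N ≤ m → s m ≤ (∏ i ∈ Finset.Ico N m, (1 - a i)) * s N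
      + ∑ i ∈ Finset.Ico N m, c i := by
    intro m hm
    induction m, hm using Nat.le_induction with
    | base => simp
    | succ m hm ih =>
      have h1 : 0 ≤ 1 - a m := by linarith [ha1 m]
      have hprod : 0 ≤ ∏ i ∈ Finset.Ico N m, (1 - a i) :=
        Finset.prod_nonneg fun i _ => by linarith [ha1 i]
      have hcs : 0 ≤ ∑ i ∈ Finset.Ico N m, c i := Finset.sum_nonneg fun i _ => hc i
      rw [Finset.prod_Ico_succ_top hm, Finset.sum_Ico_succ_top hm]
      have h2 := mul_le_mul_of_nonneg_left ih h1
      have h3 := mul_nonneg (ha0 m) hcs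
      nlinarith [hrec m]
  have hkey := key n hNn
  -- product bound
  have hprodn : (∏ i ∈ Finset.Ico N n, (1 - a i))
      ≤ Real.exp (-(∑ i ∈ Finset.Ico N n, a i)) := by
    rw [← Finset.sum_neg_distrib, Real.exp_sum]
    exact Finset.prod_le_prod (fun i _ => by linarith [ha1 i])
      (fun i _ => by linarith [Real.add_one_le_exp (-(a i))])
  -- sum of a on Ico N n is at least M
  have hsplit : ∑ i ∈ Finset.range N, a i + ∑ i ∈ Finset.Ico N n, a i
      = ∑ i ∈ Finset.range n, a i := by
    simp only [Finset.range_eq_Ico]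
    exact Finset.sum_Ico_consecutive _ (Nat.zero_le N) hNn
  have hbig : ((N + M : ℕ) : ℝ) ≤ ∑ i ∈ Finset.range n, a i := by
    refine hsumθ.trans (Finset.sum_le_sum_of_subset_of_nonneg ?_ fun i _ _ => ha0 i)
    exact Finset.range_subset_range.2 hn
  have hIco : (M : ℝ) ≤ ∑ i ∈ Finset.Ico N n, a i := by
    have h := hlen N
    push_cast at hbig h
    linarith
  have hx : (0:ℝ) < 2 * L * (k + 1) := by positivity
  have hlogM : Real.log (2 * L * (k + 1)) ≤ (M : ℝ) := Nat.le_ceil _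
  have hexp : Real.exp (-(∑ i ∈ Finset.Ico N n, a i)) ≤ 1 / (2 * L * (k + 1)) := by
    rw [show (1:ℝ) / (2 * L * (k + 1)) = Real.exp (-Real.log (2 * L * (k + 1))) by
      rw [Real.exp_neg, Real.exp_log hx, one_div]]
    exact Real.exp_le_exp.2 (by linarith)
  have hcsum : ∑ i ∈ Finset.Ico N n, c i ≤ 1 / (2 * (k : ℝ) + 2) := by
    have h := hχ (2 * k + 1) (χ (2 * k + 1)) le_rfl (n - N)
    rw [show χ (2 * k + 1) + 1 + (n - N) = n by omega] at h
    calc ∑ i ∈ Finset.Ico N n, c i ≤ 1 / ((2 * k + 1 : ℕ) + 1) := h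
      _ = 1 / (2 * (k : ℝ) + 2) := by push_cast; ring
  have hprodnn : 0 ≤ ∏ i ∈ Finset.Ico N n, (1 - a i) :=
    Finset.prod_nonneg fun i _ => by linarith [ha1 i]
  have hLpos : (0:ℝ) < L := by exact_mod_cast Nat.lt_of_lt_of_le Nat.zero_lt_one hL
  have hPsN : (∏ i ∈ Finset.Ico N n, (1 - a i)) * s N ≤ 1 / (2 * L * (k + 1)) * L :=
    le_trans (mul_le_mul_of_nonneg_left (hLs N) hprodnn)
      (mul_le_mul_of_nonneg_right (hprodn.trans hexp) hLpos.le)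
  have heq : 1 / (2 * (L:ℝ) * (k + 1)) * L = 1 / (2 * (k:ℝ) + 2) := by
    field_simp
  have hfin : 1 / (2 * (k:ℝ) + 2) + 1 / (2 * (k:ℝ) + 2) = 1 / ((k:ℝ) + 1) := by
    rw [← add_div]
    rw [show (2 : ℝ) * k + 2 = 2 * (k + 1) by ring]
    rw [show (2:ℝ) = 1 + 1 by norm_num]
    field_simp
  have : s n ≤ 1 / ((k:ℝ) + 1) := by linarith
  exact_mod_cast this
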